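/- In a stochastic game, if a distribution d₀ is almost-sure winning for the reachability objective ◇T, then there exists a single memoryless player-1 strategy σ such that for all ε > 0 there exists h_ε ∈ ℕ with Pr^{σ,τ}_{d₀}(◇^{≤h_ε} T) ≥ 1 − ε for every player-2 strategy τ. -/

import Mathlib

open Finset

/-- A two-player stochastic game: transition kernel `δ q a b q'`. -/
structure Game (Q A : Type) where
  δ : Q → A → A → Q → ℝ

/-- Validity of the transition kernel: a probability distribution on `Q` for each `q,a,b`. -/
def IsGame {Q A : Type} [Fintype Q] (G : Game Q A) : Prop :=
  (∀ q a b q', 0 ≤ G.δ q a b q') ∧ (∀ q a b, (∑ q' : Q, G.δ q a b q') = 1)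

/-- A probability distribution over a finite set. -/
def IsDist {Q : Type} [Fintype Q] (d : Q → ℝ) : Prop :=
  (∀ q, 0 ≤ d q) ∧ (∑ q : Q, d q) = 1

/-- Randomized player-1 strategies: map (reversed) state histories to distributions on actions. -/
abbrev Strat1 (Q A : Type) := List Q → A → ℝ
/-- Randomized player-2 strategies: also see the action chosen by player 1. -/
abbrev Strat2 (Q A : Type) := List Q → A → A → ℝ

def IsStrat1 {Q A : Type} [Fintype A] (σ : Strat1 Q A) : Prop :=
  ∀ h, (∀ a, 0 ≤ σ h a) ∧ (∑ a : A, σ h a) = 1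

def IsStrat2 {Q A : Type} [Fintype A] (τ : Strat2 Q A) : Prop :=
  ∀ h a, (∀ b, 0 ≤ τ h a b) ∧ (∑ b : A, τ h a b) = 1

/-- Probability of a finite state history (in reverse chronological order:
the head is the current state), with the actions marginalized out. -/
def hprob {Q A : Type} [Fintype A] (G : Game Q A) (d0 : Q → ℝ)
    (σ : Strat1 Q A) (τ : Strat2 Q A) : List Q → ℝ
  | [] => 1
  | [q] => d0 q
  | q :: q' :: h =>
      (∑ a : A, ∑ b : A, σ (q' :: h) a * τ (q' :: h) a b * G.δ q' a b q) *
        hprob G d0 σ τ (q' :: h)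

/-- The outcome sequence of distributions: probability to be in state `q` after `i` rounds. -/
def outSeq {Q A : Type} [Fintype Q] [Fintype A] (G : Game Q A) (d0 : Q → ℝ)
    (σ : Strat1 Q A) (τ : Strat2 Q A) (i : ℕ) (q : Q) : ℝ :=
  ∑ h : Fin i → Q, hprob G d0 σ τ (q :: (List.ofFn h).reverse)

/-- Probability mass of a set of states. -/
def mass {Q : Type} (d : Q → ℝ) (T : Finset Q) : ℝ := ∑ q ∈ T, d q

/-- The four synchronizing modes, on a sequence of probability masses. -/
def AlwaysSync (m : ℕ → ℝ) (ε : ℝ) : Prop := ∀ i, 1 - ε ≤ m i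
def EventSync (m : ℕ → ℝ) (ε : ℝ) : Prop := ∃ i, 1 - ε ≤ m i
def WeaklySync (m : ℕ → ℝ) (ε : ℝ) : Prop := ∀ N, ∃ i, N ≤ i ∧ 1 - ε ≤ m i
def StronglySync (m : ℕ → ℝ) (ε : ℝ) : Prop := ∃ N, ∀ i, N ≤ i → 1 - ε ≤ m i

/-- Sure winning region for a synchronizing mode `sync`: some player-1 strategy ensures
`1`-synchronization against all player-2 strategies. -/
def SureWin {Q A : Type} [Fintype Q] [Fintype A] (G : Game Q A) (T : Finset Q)
    (sync : (ℕ → ℝ) → ℝ → Prop) : Set (Q → ℝ) :=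
  {d0 | IsDist d0 ∧ ∃ σ, IsStrat1 σ ∧ ∀ τ, IsStrat2 τ →
    sync (fun i => mass (outSeq G d0 σ τ i) T) 0}

/-- Almost-sure winning region for a synchronizing mode `sync`: some player-1 strategy
ensures `(1-ε)`-synchronization for all `ε > 0` against all player-2 strategies. -/
def ASWin {Q A : Type} [Fintype Q] [Fintype A] (G : Game Q A) (T : Finset Q)
    (sync : (ℕ → ℝ) → ℝ → Prop) : Set (Q → ℝ) :=
  {d0 | IsDist d0 ∧ ∃ σ, IsStrat1 σ ∧ ∀ τ, IsStrat2 τ →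
    ∀ ε : ℝ, 0 < ε → sync (fun i => mass (outSeq G d0 σ τ i) T) ε}

/-- Dirac distribution. -/
def dirac {Q : Type} [DecidableEq Q] (q : Q) : Q → ℝ := fun q' => if q' = q then 1 else 0

open Classical in
/-- Probability of reaching `T` within `i` steps: total probability of the length-`(i+1)`
state histories that visit `T`. -/
noncomputable def reachProb {Q A : Type} [Fintype Q] [Fintype A] (G : Game Q A)
    (d0 : Q → ℝ) (σ : Strat1 Q A) (τ : Strat2 Q A) (T : Finset Q) (i : ℕ) : ℝ :=
  ∑ h : Fin (i + 1) → Q,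
    if ∃ j, h j ∈ T then hprob G d0 σ τ (List.ofFn h).reverse else 0

/-- A memoryless player-1 strategy only depends on the current state (the head of the
reversed history). -/
def Memoryless1 {Q A : Type} (σ : Strat1 Q A) : Prop :=
  ∀ h h' : List Q, h.head? = h'.head? → σ h = σ h'

/-- A memoryless player-2 strategy only depends on the current state and the action
of player 1. -/
def Memoryless2 {Q A : Type} (τ : Strat2 Q A) : Prop :=
  ∀ (h h' : List Q) (a : A), h.head? = h'.head? → τ h a = τ h' a

section Core
open scoped Classical
variable {Q A : Type} [Fintype Q] [Fintype A] (G : Game Q A) (T : Finset Q)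
  (d0 : Q → ℝ) (σ : Strat1 Q A) (τ : Strat2 Q A)

/-- step probability from history `q::h` to next state `q'`. -/
noncomputable def stp (q : Q) (h : List Q) (q' : Q) : ℝ :=
  ∑ a : A, ∑ b : A, σ (q :: h) a * τ (q :: h) a b * G.δ q a b q'

lemma hprob_cons (q' q : Q) (h : List Q) :
    hprob G d0 σ τ (q' :: q :: h) = stp G σ τ q h q' * hprob G d0 σ τ (q :: h) := rfl

lemma stp_nonneg (hG : IsGame G) (hσ : IsStrat1 σ) (hτ : IsStrat2 τ)
    (q : Q) (h : List Q) (q' : Q) : 0 ≤ stp G σ τ q h q' := by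
  refine Finset.sum_nonneg fun a _ => Finset.sum_nonneg fun b _ => ?_
  exact mul_nonneg (mul_nonneg ((hσ _).1 a) ((hτ _ _).1 b)) (hG.1 _ _ _ _)

lemma stp_sum (hG : IsGame G) (hσ : IsStrat1 σ) (hτ : IsStrat2 τ)
    (q : Q) (h : List Q) : ∑ q' : Q, stp G σ τ q h q' = 1 := by
  unfold stp
  rw [Finset.sum_comm]
  have : ∀ a : A, ∑ q' : Q, ∑ b : A, σ (q :: h) a * τ (q :: h) a b * G.δ q a b q'
      = σ (q :: h) a := by
    intro a
    rw [Finset.sum_comm]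
    have : ∀ b : A, ∑ q' : Q, σ (q :: h) a * τ (q :: h) a b * G.δ q a b q'
        = σ (q :: h) a * τ (q :: h) a b := by
      intro b
      rw [← Finset.mul_sum, hG.2 q a b, mul_one]
    rw [Finset.sum_congr rfl fun b _ => this b, ← Finset.mul_sum, (hτ _ _).2, mul_one]
  rw [Finset.sum_congr rfl fun a _ => this a, (hσ _).2]

lemma hprob_nonneg (hG : IsGame G) (hd : ∀ q, 0 ≤ d0 q) (hσ : IsStrat1 σ) (hτ : IsStrat2 τ) :
    ∀ l, 0 ≤ hprob G d0 σ τ l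
  | [] => zero_le_one
  | [q] => hd q
  | q' :: q :: h => by
      rw [hprob_cons]
      exact mul_nonneg (stp_nonneg G σ τ hG hσ hτ q h q')
        (hprob_nonneg hG hd hσ hτ (q :: h))

/-- Avoid probability: from current history `q::h`, probability the next `i` states avoid `T`. -/
noncomputable def Av : ℕ → List Q → ℝ
  | 0, _ => 1
  | _ + 1, [] => 0
  | i + 1, q :: h => ∑ q' ∈ Tᶜ, stp G σ τ q h q' * Av i (q' :: q :: h)

lemma Av_nonneg (hG : IsGame G) (hσ : IsStrat1 σ) (hτ : IsStrat2 τ) :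
    ∀ (i : ℕ) (l : List Q), 0 ≤ Av G T σ τ i l
  | 0, _ => zero_le_one
  | _ + 1, [] => le_refl 0
  | i + 1, q :: h => by
      refine Finset.sum_nonneg fun q' _ => mul_nonneg (stp_nonneg G σ τ hG hσ hτ q h q') ?_
      exact Av_nonneg hG hσ hτ i (q' :: q :: h)

lemma Av_le_one (hG : IsGame G) (hσ : IsStrat1 σ) (hτ : IsStrat2 τ) :
    ∀ (i : ℕ) (l : List Q), Av G T σ τ i l ≤ 1
  | 0, _ => le_refl 1
  | _ + 1, [] => zero_le_one
  | i + 1, q :: h => by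
      calc ∑ q' ∈ Tᶜ, stp G σ τ q h q' * Av G T σ τ i (q' :: q :: h)
          ≤ ∑ q' ∈ Tᶜ, stp G σ τ q h q' * 1 := by
            refine Finset.sum_le_sum fun q' _ => ?_
            exact mul_le_mul_of_nonneg_left (Av_le_one hG hσ hτ i _)
              (stp_nonneg G σ τ hG hσ hτ q h q')
        _ ≤ ∑ q' : Q, stp G σ τ q h q' * 1 := by
            refine Finset.sum_le_sum_of_subset_of_nonneg (Finset.subset_univ _) ?_
            intro q' _ _
            exact mul_nonneg (stp_nonneg G σ τ hG hσ hτ q h q') zero_le_one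
        _ = 1 := by simp [stp_sum G σ τ hG hσ hτ]

/-- Key decomposition: avoid-mass over extensions equals prefix weight times `Av`. -/
lemma sum_avoid (hG : IsGame G) (hd : ∀ q, 0 ≤ d0 q) (hσ : IsStrat1 σ) (hτ : IsStrat2 τ) :
    ∀ (i : ℕ) (q : Q) (h : List Q),
      (∑ e : Fin i → Q, if ∀ j, e j ∉ T then
          hprob G d0 σ τ ((List.ofFn e).reverse ++ (q :: h)) else 0)
        = hprob G d0 σ τ (q :: h) * Av G T σ τ i (q :: h) := by
  intro i
  induction i with
  | zero =>
      intro q h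
      simp [Av]
  | succ i ih =>
      intro q h
      rw [← (Fin.consEquiv (fun _ : Fin (i+1) => Q)).sum_comp]
      rw [Fintype.sum_prod_type]
      have key : ∀ (q' : Q) (e' : Fin i → Q),
          (if ∀ j, ((Fin.consEquiv (fun _ : Fin (i+1) => Q)) (q', e')) j ∉ T then
            hprob G d0 σ τ ((List.ofFn ((Fin.consEquiv (fun _ : Fin (i+1) => Q)) (q', e'))).reverse ++ (q :: h)) else 0)
          = (if q' ∉ T then 1 else 0) *
            (if ∀ j, e' j ∉ T then
              hprob G d0 σ τ ((List.ofFn e').reverse ++ (q' :: q :: h)) else 0) := by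
        intro q' e'
        have h1 : List.ofFn ((Fin.consEquiv (fun _ : Fin (i+1) => Q)) (q', e')) = q' :: List.ofFn e' := by
          rw [List.ofFn_succ]
          simp [Fin.consEquiv]
        have h2 : (∀ j, ((Fin.consEquiv (fun _ : Fin (i+1) => Q)) (q', e')) j ∉ T) ↔
            (q' ∉ T ∧ ∀ j, e' j ∉ T) := by
          rw [Fin.forall_fin_succ]
          simp [Fin.consEquiv]
        rw [h1, if_congr h2 rfl rfl]
        by_cases hq' : q' ∈ T
        · simp [hq']
        · by_cases he' : ∀ j, e' j ∉ T
          · simp [hq', he', List.reverse_cons, List.append_assoc]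
          · simp [hq', he']
      rw [Finset.sum_congr rfl fun q' _ => Finset.sum_congr rfl fun e' _ => key q' e']
      have step : ∀ q' : Q, ∑ e' : Fin i → Q, (if q' ∉ T then 1 else 0) *
          (if ∀ j, e' j ∉ T then hprob G d0 σ τ ((List.ofFn e').reverse ++ (q' :: q :: h)) else 0)
          = (if q' ∉ T then 1 else 0) *
            (hprob G d0 σ τ (q' :: q :: h) * Av G T σ τ i (q' :: q :: h)) := by
        intro q'
        rw [← Finset.mul_sum, ih q' (q :: h)]
      rw [Finset.sum_congr rfl fun q' _ => step q']
      have lhs_eq : ∑ q' : Q, (if q' ∉ T then 1 else 0) *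
          (hprob G d0 σ τ (q' :: q :: h) * Av G T σ τ i (q' :: q :: h))
          = ∑ q' ∈ Tᶜ, hprob G d0 σ τ (q' :: q :: h) * Av G T σ τ i (q' :: q :: h) := by
        calc ∑ q' : Q, (if q' ∉ T then 1 else 0) *
              (hprob G d0 σ τ (q' :: q :: h) * Av G T σ τ i (q' :: q :: h))
            = ∑ q' : Q, if q' ∈ Tᶜ then
                hprob G d0 σ τ (q' :: q :: h) * Av G T σ τ i (q' :: q :: h) else 0 := by
              refine Finset.sum_congr rfl fun q' _ => ?_
              by_cases hq : q' ∈ T <;> simp [hq]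
          _ = ∑ q' ∈ Finset.univ ∩ Tᶜ,
                hprob G d0 σ τ (q' :: q :: h) * Av G T σ τ i (q' :: q :: h) :=
              Finset.sum_ite_mem _ _ _
          _ = _ := by rw [Finset.univ_inter]
      rw [lhs_eq]
      show _ = hprob G d0 σ τ (q :: h) *
        ∑ q' ∈ Tᶜ, stp G σ τ q h q' * Av G T σ τ i (q' :: q :: h)
      rw [Finset.mul_sum]
      refine Finset.sum_congr rfl fun q' _ => ?_
      rw [hprob_cons]
      ring

lemma sum_total (hG : IsGame G) (hσ : IsStrat1 σ) (hτ : IsStrat2 τ) :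
    ∀ (i : ℕ) (q : Q) (h : List Q),
      (∑ e : Fin i → Q, hprob G d0 σ τ ((List.ofFn e).reverse ++ (q :: h)))
        = hprob G d0 σ τ (q :: h) := by
  intro i
  induction i with
  | zero => intro q h; simp
  | succ i ih =>
      intro q h
      rw [← (Fin.consEquiv (fun _ : Fin (i+1) => Q)).sum_comp, Fintype.sum_prod_type]
      have key : ∀ (q' : Q) (e' : Fin i → Q),
          hprob G d0 σ τ ((List.ofFn ((Fin.consEquiv (fun _ : Fin (i+1) => Q)) (q', e'))).reverse ++ (q :: h))
          = hprob G d0 σ τ ((List.ofFn e').reverse ++ (q' :: q :: h)) := by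
        intro q' e'
        have h1 : List.ofFn ((Fin.consEquiv (fun _ : Fin (i+1) => Q)) (q', e')) = q' :: List.ofFn e' := by
          rw [List.ofFn_succ]; simp [Fin.consEquiv]
        rw [h1]; simp [List.reverse_cons, List.append_assoc]
      rw [Finset.sum_congr rfl fun q' _ => Finset.sum_congr rfl fun e' _ => key q' e']
      rw [Finset.sum_congr rfl fun q' _ => ih q' (q :: h)]
      rw [Finset.sum_congr rfl fun q' (_ : q' ∈ Finset.univ) => hprob_cons G d0 σ τ q' q h]
      rw [← Finset.sum_mul, stp_sum G σ τ hG hσ hτ, one_mul]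

/-- The master formula: `1 - reachProb = ∑_{q ∉ T} d0 q * Av i [q]`. -/
lemma reach_formula (hG : IsGame G) (hd : IsDist d0) (hσ : IsStrat1 σ) (hτ : IsStrat2 τ)
    (i : ℕ) :
    1 - reachProb G d0 σ τ T i = ∑ q ∈ Tᶜ, d0 q * Av G T σ τ i [q] := by
  classical
  have total : (∑ e : Fin (i+1) → Q, hprob G d0 σ τ (List.ofFn e).reverse) = 1 := by
    rw [← (Fin.consEquiv (fun _ : Fin (i+1) => Q)).sum_comp, Fintype.sum_prod_type]
    have key : ∀ (q : Q) (e' : Fin i → Q),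
        hprob G d0 σ τ (List.ofFn ((Fin.consEquiv (fun _ : Fin (i+1) => Q)) (q, e'))).reverse
        = hprob G d0 σ τ ((List.ofFn e').reverse ++ [q]) := by
      intro q e'
      have h1 : List.ofFn ((Fin.consEquiv (fun _ : Fin (i+1) => Q)) (q, e')) = q :: List.ofFn e' := by
        rw [List.ofFn_succ]; simp [Fin.consEquiv]
      rw [h1]; simp [List.reverse_cons]
    rw [Finset.sum_congr rfl fun q _ => Finset.sum_congr rfl fun e' _ => key q e']
    rw [Finset.sum_congr rfl fun q _ => sum_total G d0 σ τ hG hσ hτ i q []]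
    exact hd.2
  have split : ∀ e : Fin (i+1) → Q,
      (if ∃ j, e j ∈ T then hprob G d0 σ τ (List.ofFn e).reverse else 0)
      = hprob G d0 σ τ (List.ofFn e).reverse -
        (if ∀ j, e j ∉ T then hprob G d0 σ τ (List.ofFn e).reverse else 0) := by
    intro e
    by_cases hc : ∃ j, e j ∈ T
    · have : ¬ ∀ j, e j ∉ T := by push_neg; simpa using hc
      simp [hc, this]
    · have : ∀ j, e j ∉ T := by push_neg at hc; exact hc
      simp [hc, this]
  rw [reachProb, Finset.sum_congr rfl fun e _ => split e, Finset.sum_sub_distrib, total]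
  ring_nf
  have avoid : (∑ e : Fin (i+1) → Q, if ∀ j, e j ∉ T then
      hprob G d0 σ τ (List.ofFn e).reverse else 0) = ∑ q ∈ Tᶜ, d0 q * Av G T σ τ i [q] := by
    rw [← (Fin.consEquiv (fun _ : Fin (i+1) => Q)).sum_comp, Fintype.sum_prod_type]
    have key : ∀ (q : Q) (e' : Fin i → Q),
        (if ∀ j, ((Fin.consEquiv (fun _ : Fin (i+1) => Q)) (q, e')) j ∉ T then
          hprob G d0 σ τ (List.ofFn ((Fin.consEquiv (fun _ : Fin (i+1) => Q)) (q, e'))).reverse else 0)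
        = (if q ∉ T then 1 else 0) *
          (if ∀ j, e' j ∉ T then hprob G d0 σ τ ((List.ofFn e').reverse ++ [q]) else 0) := by
      intro q e'
      have h1 : List.ofFn ((Fin.consEquiv (fun _ : Fin (i+1) => Q)) (q, e')) = q :: List.ofFn e' := by
        rw [List.ofFn_succ]; simp [Fin.consEquiv]
      have h2 : (∀ j, ((Fin.consEquiv (fun _ : Fin (i+1) => Q)) (q, e')) j ∉ T) ↔
          (q ∉ T ∧ ∀ j, e' j ∉ T) := by
        rw [Fin.forall_fin_succ]; simp [Fin.consEquiv]
      rw [h1, if_congr h2 rfl rfl]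
      by_cases hq : q ∈ T
      · simp [hq]
      · by_cases he' : ∀ j, e' j ∉ T
        · simp [hq, he', List.reverse_cons]
        · simp [hq, he']
    rw [Finset.sum_congr rfl fun q _ => Finset.sum_congr rfl fun e' _ => key q e']
    have step : ∀ q : Q, (∑ e' : Fin i → Q, (if q ∉ T then 1 else 0) *
        (if ∀ j, e' j ∉ T then hprob G d0 σ τ ((List.ofFn e').reverse ++ [q]) else 0))
        = (if q ∉ T then 1 else 0) * (d0 q * Av G T σ τ i [q]) := by
      intro q
      rw [← Finset.mul_sum, sum_avoid G T d0 σ τ hG hd.1 hσ hτ i q []]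
      rfl
    rw [Finset.sum_congr rfl fun q _ => step q]
    calc ∑ q : Q, (if q ∉ T then 1 else 0) * (d0 q * Av G T σ τ i [q])
        = ∑ q : Q, if q ∈ Tᶜ then d0 q * Av G T σ τ i [q] else 0 := by
          refine Finset.sum_congr rfl fun q _ => ?_
          by_cases hq : q ∈ T <;> simp [hq]
      _ = ∑ q ∈ Finset.univ ∩ Tᶜ, d0 q * Av G T σ τ i [q] := Finset.sum_ite_mem _ _ _
      _ = _ := by rw [Finset.univ_inter]
  rw [← avoid]
  ring

/-! ### Fixpoint machinery -/

/-- generic stabilization of an increasing iteration chain on `Finset Q`. -/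
lemma chain_stab {Φ : Finset Q → Finset Q} (g : ℕ → Finset Q)
    (hstep : ∀ k, g (k+1) = Φ (g k)) (mono : ∀ k, g k ⊆ g (k+1)) :
    ∀ m : ℕ, Fintype.card Q ≤ m → g m = g (Fintype.card Q) := by
  have hprop : ∀ k, g k = g (k+1) → ∀ m, k ≤ m → g m = g k := by
    intro k hk m hm
    induction m with
    | zero => exact (Nat.le_zero.mp hm ▸ rfl : g 0 = g k)
    | succ m ih =>
        by_cases h : k ≤ m
        · rw [hstep m, ih h, ← hstep k, ← hk]
        · have : k = m + 1 := by omega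
          rw [this]
  have hex : ∃ k, k ≤ Fintype.card Q ∧ g k = g (k+1) := by
    by_contra hc
    push_neg at hc
    have hcard : ∀ k, k ≤ Fintype.card Q → k ≤ (g k).card := by
      intro k hk
      induction k with
      | zero => simp
      | succ k ih =>
          have h1 : k ≤ (g k).card := ih (by omega)
          have hne : g k ≠ g (k+1) := hc k (by omega)
          have h2 : (g k).card < (g (k+1)).card :=
            Finset.card_lt_card ((mono k).ssubset_of_ne hne)
          omega
    have h1 : Fintype.card Q ≤ (g (Fintype.card Q)).card := hcard _ le_rfl
    have h2 : g (Fintype.card Q) = Finset.univ := by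
      have h := Finset.card_le_univ (g (Fintype.card Q))
      exact (Finset.card_eq_iff_eq_univ _).mp
        (le_antisymm (by simpa using h) h1)
    have h3 : g (Fintype.card Q + 1) = Finset.univ := by
      apply Finset.univ_subset_iff.mp
      rw [← h2]; exact mono _
    exact hc (Fintype.card Q) le_rfl (h2.trans h3.symm)
  obtain ⟨k, hk, he⟩ := hex
  intro m hm
  rw [hprop k he m (le_trans hk hm), hprop k he (Fintype.card Q) hk]

/-- stabilization of a decreasing iteration chain. -/
lemma chain_stab_anti {Φ : Finset Q → Finset Q} (g : ℕ → Finset Q)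
    (hstep : ∀ k, g (k+1) = Φ (g k)) (mono : ∀ k, g (k+1) ⊆ g k) :
    ∀ m : ℕ, Fintype.card Q ≤ m → g m = g (Fintype.card Q) := by
  classical
  have := chain_stab (Φ := fun s => (Φ sᶜ)ᶜ) (g := fun k => (g k)ᶜ)
    (fun k => by simp [hstep k]) (fun k => Finset.compl_subset_compl.mpr (mono k))
  intro m hm
  have h : (g m)ᶜ = (g (Fintype.card Q))ᶜ := this m hm
  have h2 := congrArg (·ᶜ) h
  simpa using h2

/-! ### The almost-sure winning region -/

noncomputable def pre (Y X : Finset Q) : Finset Q :=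
  Finset.univ.filter (fun q => ∃ a : A,
    (∀ (b : A) (q' : Q), 0 < G.δ q a b q' → q' ∈ Y) ∧
    (∀ b : A, ∃ q' : Q, 0 < G.δ q a b q' ∧ q' ∈ X))

lemma pre_mono {Y Y' X X' : Finset Q} (hY : Y ⊆ Y') (hX : X ⊆ X') :
    pre G Y X ⊆ pre G Y' X' := by
  intro q hq
  rw [pre, Finset.mem_filter] at hq ⊢
  obtain ⟨-, a, h1, h2⟩ := hq
  exact ⟨Finset.mem_univ q, a, fun b q' h => hY (h1 b q' h),
    fun b => (h2 b).imp fun q' ⟨h, h'⟩ => ⟨h, hX h'⟩⟩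

noncomputable def Bseq (Y : Finset Q) : ℕ → Finset Q :=
  fun k => (fun X => T ∪ pre G Y X)^[k] ∅

lemma Bseq_succ (Y : Finset Q) (k : ℕ) :
    Bseq G T Y (k+1) = T ∪ pre G Y (Bseq G T Y k) :=
  Function.iterate_succ_apply' _ k ∅

lemma Bseq_mono_k (Y : Finset Q) : ∀ k, Bseq G T Y k ⊆ Bseq G T Y (k+1) := by
  intro k
  induction k with
  | zero => simp [Bseq]
  | succ k ih =>
      rw [Bseq_succ, Bseq_succ]
      exact Finset.union_subset_union (le_refl T) (pre_mono G (le_refl Y) ih)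

lemma Bseq_mono_Y {Y Y' : Finset Q} (h : Y ⊆ Y') : ∀ k, Bseq G T Y k ⊆ Bseq G T Y' k := by
  intro k
  induction k with
  | zero => simp [Bseq]
  | succ k ih =>
      rw [Bseq_succ, Bseq_succ]
      exact Finset.union_subset_union (le_refl T) (pre_mono G h ih)

noncomputable def mu (Y : Finset Q) : Finset Q := Bseq G T Y (Fintype.card Q)

lemma mu_fix (Y : Finset Q) : mu G T Y = T ∪ pre G Y (mu G T Y) := by
  have h := chain_stab (Φ := fun X => T ∪ pre G Y X) (Bseq G T Y)
    (fun k => Bseq_succ G T Y k) (Bseq_mono_k G T Y) (Fintype.card Q + 1) (by omega)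
  calc mu G T Y = Bseq G T Y (Fintype.card Q + 1) := h.symm
    _ = T ∪ pre G Y (mu G T Y) := Bseq_succ G T Y _

lemma mu_mono {Y Y' : Finset Q} (h : Y ⊆ Y') : mu G T Y ⊆ mu G T Y' :=
  Bseq_mono_Y G T h _

noncomputable def Yseq : ℕ → Finset Q := fun m => (mu G T)^[m] Finset.univ

lemma Yseq_succ (m : ℕ) : Yseq G T (m+1) = mu G T (Yseq G T m) :=
  Function.iterate_succ_apply' _ m _

lemma Yseq_anti : ∀ m, Yseq G T (m+1) ⊆ Yseq G T m := by
  intro m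
  induction m with
  | zero => simp [Yseq]
  | succ m ih =>
      have h := mu_mono G T ih
      rw [← Yseq_succ, ← Yseq_succ] at h
      exact h

lemma Yseq_anti' {m m' : ℕ} (h : m ≤ m') : Yseq G T m' ⊆ Yseq G T m := by
  induction m' with
  | zero =>
      obtain rfl := Nat.le_zero.mp h
      exact Finset.Subset.refl _
  | succ m' ih =>
      by_cases hm : m ≤ m'
      · exact (Yseq_anti G T m').trans (ih hm)
      · have : m = m' + 1 := by omega
        rw [this]

noncomputable def Wr : Finset Q := Yseq G T (Fintype.card Q)

lemma Wr_fix : Wr G T = mu G T (Wr G T) := by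
  have h := chain_stab_anti (Φ := mu G T) (Yseq G T)
    (fun m => Yseq_succ G T m) (Yseq_anti G T) (Fintype.card Q + 1) (by omega)
  calc Wr G T = Yseq G T (Fintype.card Q + 1) := h.symm
    _ = mu G T (Wr G T) := Yseq_succ G T _

lemma T_sub_Wr : T ⊆ Wr G T := by
  rw [Wr_fix, mu_fix]
  exact Finset.subset_union_left

lemma Wr_sub_Yseq (m : ℕ) (hm : m ≤ Fintype.card Q) : Wr G T ⊆ Yseq G T m :=
  Yseq_anti' G T hm

/-- rank within the winning region. -/
noncomputable def rnk (q : Q) : ℕ :=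
  if h : ∃ k, q ∈ Bseq G T (Wr G T) k then Nat.find h else 0

/-- level of a losing state. -/
noncomputable def lvl (q : Q) : ℕ :=
  if h : ∃ m, q ∉ Yseq G T m then Nat.find h else 0

lemma Wr_eq_Bseq : Wr G T = Bseq G T (Wr G T) (Fintype.card Q) := Wr_fix G T

lemma rnk_le_of_mem {q : Q} {k : ℕ} (h : q ∈ Bseq G T (Wr G T) k) : rnk G T q ≤ k := by
  rw [rnk, dif_pos ⟨k, h⟩]
  exact Nat.find_le h

lemma rnk_le_card {q : Q} (h : q ∈ Wr G T) : rnk G T q ≤ Fintype.card Q :=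
  rnk_le_of_mem G T (Wr_eq_Bseq G T ▸ h)

lemma rnk_pos {q : Q} (h : q ∈ Wr G T) : 1 ≤ rnk G T q := by
  have hex : ∃ k, q ∈ Bseq G T (Wr G T) k := ⟨_, Wr_eq_Bseq G T ▸ h⟩
  rw [rnk, dif_pos hex]
  rcases Nat.eq_zero_or_pos (Nat.find hex) with h0 | h1
  · have := Nat.find_spec hex
    rw [h0] at this
    simp [Bseq] at this
  · exact h1

lemma mem_Bseq_rnk {q : Q} (h : q ∈ Wr G T) : q ∈ Bseq G T (Wr G T) (rnk G T q) := by
  have hex : ∃ k, q ∈ Bseq G T (Wr G T) k := ⟨_, Wr_eq_Bseq G T ▸ h⟩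
  rw [rnk, dif_pos hex]
  exact Nat.find_spec hex

/-- Winning structure: a safe and progressing action. -/
lemma win_struct {q : Q} (hq : q ∈ Wr G T) (hqT : q ∉ T) : ∃ a : A,
    (∀ (b : A) (q' : Q), 0 < G.δ q a b q' → q' ∈ Wr G T) ∧
    (∀ b : A, ∃ q'' : Q, 0 < G.δ q a b q'' ∧ q'' ∈ Bseq G T (Wr G T) (rnk G T q - 1)) := by
  have h1 : q ∈ Bseq G T (Wr G T) (rnk G T q) := mem_Bseq_rnk G T hq
  have h2 : 1 ≤ rnk G T q := rnk_pos G T hq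
  have h3 : rnk G T q = (rnk G T q - 1) + 1 := by omega
  rw [h3, Bseq_succ, Finset.mem_union] at h1
  rcases h1 with h1 | h1
  · exact absurd h1 hqT
  · rw [pre, Finset.mem_filter] at h1
    exact h1.2

lemma lvl_le_of_not_mem {q : Q} {m : ℕ} (h : q ∉ Yseq G T m) : lvl G T q ≤ m := by
  rw [lvl, dif_pos ⟨m, h⟩]
  exact Nat.find_le h

lemma lvl_le_card {q : Q} (h : q ∉ Wr G T) : lvl G T q ≤ Fintype.card Q :=
  lvl_le_of_not_mem G T h

lemma not_mem_Yseq_lvl {q : Q} (h : q ∉ Wr G T) : q ∉ Yseq G T (lvl G T q) := by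
  have hex : ∃ m, q ∉ Yseq G T m := ⟨_, h⟩
  rw [lvl, dif_pos hex]
  exact Nat.find_spec hex

lemma lvl_pos {q : Q} (h : q ∉ Wr G T) : 1 ≤ lvl G T q := by
  rcases Nat.eq_zero_or_pos (lvl G T q) with h0 | h1
  · have := not_mem_Yseq_lvl G T h
    rw [h0] at this
    simp [Yseq] at this
  · exact h1

lemma mem_Yseq_lvl_sub_one {q : Q} (h : q ∉ Wr G T) : q ∈ Yseq G T (lvl G T q - 1) := by
  by_contra hc
  have := lvl_le_of_not_mem G T hc
  have := lvl_pos G T h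
  omega

lemma not_Wr_of_not_Yseq {q : Q} {m : ℕ} (hm : m ≤ Fintype.card Q) (h : q ∉ Yseq G T m) :
    q ∉ Wr G T := fun hw => h (Wr_sub_Yseq G T m hm hw)

lemma not_T_of_not_Wr {q : Q} (h : q ∉ Wr G T) : q ∉ T :=
  fun ht => h (T_sub_Wr G T ht)

/-- Losing structure: every action admits a spoiling response. -/
lemma lose_struct {q : Q} (hq : q ∉ Wr G T) : ∀ a : A,
    (∃ (b : A) (q' : Q), 0 < G.δ q a b q' ∧ q' ∉ Yseq G T (lvl G T q - 1)) ∨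
    (∃ b : A, ∀ q' : Q, 0 < G.δ q a b q' → q' ∉ Yseq G T (lvl G T q)) := by
  intro a
  have h1 : q ∈ Yseq G T (lvl G T q - 1) := mem_Yseq_lvl_sub_one G T hq
  have h2 : q ∉ Yseq G T (lvl G T q) := not_mem_Yseq_lvl G T hq
  have h3 : lvl G T q = (lvl G T q - 1) + 1 := by
    have := lvl_pos G T hq; omega
  rw [h3, Yseq_succ, mu_fix, Finset.mem_union] at h2
  push_neg at h2
  obtain ⟨-, h2⟩ := h2
  rw [pre, Finset.mem_filter] at h2
  have h4 : ¬ ((∀ (b : A) (q' : Q), 0 < G.δ q a b q' → q' ∈ Yseq G T (lvl G T q - 1)) ∧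
      (∀ b : A, ∃ q' : Q, 0 < G.δ q a b q' ∧ q' ∈ mu G T (Yseq G T (lvl G T q - 1)))) := by
    intro hcon
    exact h2 ⟨Finset.mem_univ q, a, hcon⟩
  rw [not_and_or] at h4
  rcases h4 with h4 | h4
  · push_neg at h4
    obtain ⟨b, q', hδ, hq'⟩ := h4
    exact Or.inl ⟨b, q', hδ, hq'⟩
  · push_neg at h4
    obtain ⟨b, hb⟩ := h4
    refine Or.inr ⟨b, fun q' hδ => ?_⟩
    have := hb q' hδ
    rw [h3, Yseq_succ]
    exact this

/-! ### The memoryless strategies -/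

/-- player-1 winning action at a state. -/
noncomputable def actW (a0 : A) (q : Q) : A :=
  if h : q ∈ Wr G T ∧ q ∉ T then Classical.choose (win_struct G T h.1 h.2) else a0

lemma actW_spec (a0 : A) {q : Q} (h1 : q ∈ Wr G T) (h2 : q ∉ T) :
    (∀ (b : A) (q' : Q), 0 < G.δ q (actW G T a0 q) b q' → q' ∈ Wr G T) ∧
    (∀ b : A, ∃ q'' : Q, 0 < G.δ q (actW G T a0 q) b q'' ∧
      q'' ∈ Bseq G T (Wr G T) (rnk G T q - 1)) := by
  rw [actW, dif_pos ⟨h1, h2⟩]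
  exact Classical.choose_spec (win_struct G T h1 h2)

/-- player-2 spoiling response. -/
noncomputable def bW (a0 : A) (q : Q) (a : A) : A :=
  if hq : q ∉ Wr G T then
    if hJ : ∃ (b : A) (q' : Q), 0 < G.δ q a b q' ∧ q' ∉ Yseq G T (lvl G T q - 1) then
      Classical.choose hJ
    else
      Classical.choose ((lose_struct G T hq a).resolve_left hJ)
  else a0

lemma bW_spec (a0 : A) {q : Q} (hq : q ∉ Wr G T) (a : A) :
    (∃ q' : Q, 0 < G.δ q a (bW G T a0 q a) q' ∧ q' ∉ Yseq G T (lvl G T q - 1)) ∨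
    (∀ q' : Q, 0 < G.δ q a (bW G T a0 q a) q' → q' ∉ Yseq G T (lvl G T q)) := by
  rw [bW, dif_pos hq]
  by_cases hJ : ∃ (b : A) (q' : Q), 0 < G.δ q a b q' ∧ q' ∉ Yseq G T (lvl G T q - 1)
  · rw [dif_pos hJ]
    exact Or.inl (Classical.choose_spec hJ)
  · rw [dif_neg hJ]
    exact Or.inr (Classical.choose_spec ((lose_struct G T hq a).resolve_left hJ))

noncomputable def actH (a0 : A) : Option Q → A
  | none => a0
  | some q => actW G T a0 q

noncomputable def sigmaStar (a0 : A) : Strat1 Q A :=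
  fun h a => if a = actH G T a0 h.head? then 1 else 0

noncomputable def bH (a0 : A) : Option Q → A → A
  | none, _ => a0
  | some q, a => bW G T a0 q a

noncomputable def tauStar (a0 : A) : Strat2 Q A :=
  fun h a b => if b = bH G T a0 h.head? a then 1 else 0

lemma sigmaStar_isStrat (a0 : A) : IsStrat1 (sigmaStar G T a0) := by
  intro h
  constructor
  · intro a
    simp only [sigmaStar]
    split <;> norm_num
  · simp [sigmaStar]

lemma sigmaStar_memoryless (a0 : A) : Memoryless1 (sigmaStar G T a0) := by
  intro h h' hh
  funext a
  simp only [sigmaStar, hh]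

lemma tauStar_isStrat (a0 : A) : IsStrat2 (tauStar G T a0) := by
  intro h a
  constructor
  · intro b
    simp only [tauStar]
    split <;> norm_num
  · simp [tauStar]

/-! ### Quantitative bounds -/

lemma stp_tauStar (a0 : A) (q : Q) (h : List Q) (q' : Q) :
    stp G σ (tauStar G T a0) q h q' =
      ∑ a : A, σ (q :: h) a * G.δ q a (bW G T a0 q a) q' := by
  unfold stp tauStar
  refine Finset.sum_congr rfl fun a _ => ?_
  have : ∀ b : A, σ (q :: h) a * (if b = bH G T a0 (q :: h).head? a then 1 else 0) * G.δ q a b q'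
      = if b = bW G T a0 q a then σ (q :: h) a * G.δ q a b q' else 0 := by
    intro b
    simp only [List.head?_cons, bH]
    split <;> simp [*]
  rw [Finset.sum_congr rfl fun b _ => this b,
    Finset.sum_ite_eq' Finset.univ (bW G T a0 q a) (fun b => σ (q :: h) a * G.δ q a b q'),
    if_pos (Finset.mem_univ _)]

lemma stp_sigmaStar (a0 : A) (τ : Strat2 Q A) (q : Q) (h : List Q) (q' : Q) :
    stp G (sigmaStar G T a0) τ q h q' =
      ∑ b : A, τ (q :: h) (actW G T a0 q) b * G.δ q (actW G T a0 q) b q' := by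
  unfold stp sigmaStar
  rw [Finset.sum_comm]
  refine Finset.sum_congr rfl fun b _ => ?_
  have : ∀ a : A, (if a = actH G T a0 (q :: h).head? then 1 else 0) * τ (q :: h) a b * G.δ q a b q'
      = if a = actW G T a0 q then τ (q :: h) a b * G.δ q a b q' else 0 := by
    intro a
    simp only [List.head?_cons, actH]
    split <;> simp [*]
  rw [Finset.sum_congr rfl fun a _ => this a,
    Finset.sum_ite_eq' Finset.univ (actW G T a0 q) (fun a => τ (q :: h) a b * G.δ q a b q'),
    if_pos (Finset.mem_univ _)]

variable {η : ℝ}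

/-- The spoiling bound: against `tauStar`, from a losing state, any strategy leaves
an avoidance probability of at least `η ^ lvl q`. -/
lemma spoil_bound (hG : IsGame G) (hσ : IsStrat1 σ) (a0 : A)
    (hη0 : 0 < η) (hη1 : η ≤ 1)
    (hηδ : ∀ q a b q', 0 < G.δ q a b q' → η ≤ G.δ q a b q') :
    ∀ (i : ℕ) (q : Q), q ∉ Wr G T → ∀ h : List Q,
      η ^ (lvl G T q) ≤ Av G T σ (tauStar G T a0) i (q :: h) := by
  have hτ := tauStar_isStrat G T a0
  intro i
  induction i with
  | zero => intro q hq h; exact pow_le_one₀ hη0.le hη1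
  | succ i ih =>
      intro q hq h
      show η ^ lvl G T q ≤ ∑ q' ∈ Tᶜ,
        stp G σ (tauStar G T a0) q h q' * Av G T σ (tauStar G T a0) i (q' :: q :: h)
      rw [Finset.sum_congr rfl fun q' _ => by rw [stp_tauStar G T σ a0 q h q']]
      rw [Finset.sum_congr rfl fun q' (_ : q' ∈ Tᶜ) =>
        (Finset.sum_mul _ _ _ : (∑ a : A, σ (q :: h) a * G.δ q a (bW G T a0 q a) q') * _ = _)]
      rw [Finset.sum_comm]
      have inner : ∀ a : A, σ (q :: h) a * η ^ lvl G T q ≤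
          ∑ q' ∈ Tᶜ, σ (q :: h) a * G.δ q a (bW G T a0 q a) q' *
            Av G T σ (tauStar G T a0) i (q' :: q :: h) := by
        intro a
        have hterm : ∀ q' ∈ Tᶜ, 0 ≤ G.δ q a (bW G T a0 q a) q' *
            Av G T σ (tauStar G T a0) i (q' :: q :: h) := fun q' _ =>
          mul_nonneg (hG.1 _ _ _ _) (Av_nonneg G T σ _ hG hσ hτ i _)
        have key : η ^ lvl G T q ≤ ∑ q' ∈ Tᶜ, G.δ q a (bW G T a0 q a) q' *
            Av G T σ (tauStar G T a0) i (q' :: q :: h) := by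
          rcases bW_spec G T a0 hq a with ⟨q'', hδ'', hq''⟩ | hstay
          · -- jump case
            have hlvl'' : lvl G T q'' ≤ lvl G T q - 1 := lvl_le_of_not_mem G T hq''
            have hq''W : q'' ∉ Wr G T := by
              intro hw
              exact hq'' (Wr_sub_Yseq G T _ (by
                have := lvl_le_card G T hq; omega) hw)
            have hq''T : q'' ∉ T := not_T_of_not_Wr G T hq''W
            have h1 : η * η ^ (lvl G T q - 1) ≤ G.δ q a (bW G T a0 q a) q'' *
                Av G T σ (tauStar G T a0) i (q'' :: q :: h) := by
              refine mul_le_mul (hηδ _ _ _ _ hδ'') ?_ (by positivity) (hG.1 _ _ _ _)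
              exact le_trans (pow_le_pow_of_le_one hη0.le hη1 hlvl'') (ih q'' hq''W (q :: h))
            have h2 : η ^ lvl G T q = η * η ^ (lvl G T q - 1) := by
              have := lvl_pos G T hq
              rw [← pow_succ']
              congr 1
              omega
            rw [h2]
            refine le_trans h1 (Finset.single_le_sum hterm ?_)
            simpa using hq''T
          · -- stay case
            have hsum : ∑ q' ∈ Tᶜ, G.δ q a (bW G T a0 q a) q' = 1 := by
              rw [Finset.sum_subset (Finset.subset_univ Tᶜ) ?_]
              · exact hG.2 _ _ _
              · intro q' _ hq'
                rcases eq_or_lt_of_le (hG.1 q a (bW G T a0 q a) q') with hdel | hdel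
                · exact hdel.symm
                · exfalso
                  have := not_T_of_not_Wr G T (not_Wr_of_not_Yseq G T
                    (lvl_le_card G T hq) (hstay q' hdel))
                  simp at hq'
                  exact this hq'
            calc η ^ lvl G T q = ∑ q' ∈ Tᶜ, G.δ q a (bW G T a0 q a) q' * η ^ lvl G T q := by
                  rw [← Finset.sum_mul, hsum, one_mul]
              _ ≤ _ := by
                  refine Finset.sum_le_sum fun q' _ => ?_
                  rcases eq_or_lt_of_le (hG.1 q a (bW G T a0 q a) q') with hdel | hdel
                  · rw [← hdel]; simp
                  · refine mul_le_mul_of_nonneg_left ?_ (hG.1 _ _ _ _)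
                    have hq'W : q' ∉ Wr G T := not_Wr_of_not_Yseq G T
                      (lvl_le_card G T hq) (hstay q' hdel)
                    refine le_trans (pow_le_pow_of_le_one hη0.le hη1 ?_) (ih q' hq'W (q :: h))
                    exact lvl_le_of_not_mem G T (hstay q' hdel)
        calc σ (q :: h) a * η ^ lvl G T q
            ≤ σ (q :: h) a * (∑ q' ∈ Tᶜ, G.δ q a (bW G T a0 q a) q' *
                Av G T σ (tauStar G T a0) i (q' :: q :: h)) :=
              mul_le_mul_of_nonneg_left key ((hσ _).1 a)
          _ = _ := by rw [Finset.mul_sum]; exact Finset.sum_congr rfl fun q' _ => by ring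
      calc η ^ lvl G T q = ∑ a : A, σ (q :: h) a * η ^ lvl G T q := by
            rw [← Finset.sum_mul, (hσ _).2, one_mul]
        _ ≤ _ := Finset.sum_le_sum fun a _ => inner a

end Core

/-! ### The failure-bound recursion -/

noncomputable def cfun (η : ℝ) (N : ℕ) : ℕ → ℕ → ℝ
  | 0, 0 => 0
  | 0, _ + 1 => 1
  | _ + 1, 0 => 0
  | i + 1, r + 1 => η * cfun η N i r + (1 - η) * cfun η N i N

section Cfun
variable {η : ℝ} {N : ℕ} (hη0 : 0 < η) (hη1 : η ≤ 1)
include hη0 hη1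

lemma cfun_nonneg : ∀ i r, 0 ≤ cfun η N i r := by
  intro i
  induction i with
  | zero => intro r; cases r <;> simp [cfun]
  | succ i ih =>
      intro r
      cases r with
      | zero => simp [cfun]
      | succ r =>
          rw [cfun]
          have := ih r
          have := ih N
          nlinarith

lemma cfun_le_one : ∀ i r, cfun η N i r ≤ 1 := by
  intro i
  induction i with
  | zero => intro r; cases r <;> simp [cfun]
  | succ i ih =>
      intro r
      cases r with
      | zero => simp [cfun]
      | succ r =>
          rw [cfun]
          have := ih r
          have := ih N
          nlinarith

lemma cfun_mono_r : ∀ i r, cfun η N i r ≤ cfun η N i (r + 1) := by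
  intro i
  induction i with
  | zero =>
      intro r
      cases r <;> simp [cfun]
  | succ i ih =>
      intro r
      cases r with
      | zero =>
          have h1 := cfun_nonneg hη0 hη1 (N := N) i 0
          have h2 := cfun_nonneg hη0 hη1 (N := N) i N
          simp only [cfun]
          nlinarith
      | succ r =>
          rw [cfun, cfun]
          have := ih r
          nlinarith

lemma cfun_mono_r' : ∀ {i r r'}, r ≤ r' → cfun η N i r ≤ cfun η N i r' := by
  intro i r r' h
  induction r' with
  | zero =>
      obtain rfl := Nat.le_zero.mp h
      exact le_rfl
  | succ r' ih =>
      by_cases hr : r ≤ r'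
      · exact le_trans (ih hr) (cfun_mono_r hη0 hη1 i r')
      · have : r = r' + 1 := by omega
        rw [this]

lemma cfun_anti_i : ∀ i r, cfun η N (i + 1) r ≤ cfun η N i r := by
  intro i
  induction i with
  | zero =>
      intro r
      cases r with
      | zero => simp [cfun]
      | succ r =>
          simp only [cfun]
          have h1 := cfun_le_one hη0 hη1 (N := N) 0 r
          have h2 := cfun_le_one hη0 hη1 (N := N) 0 N
          nlinarith
  | succ i ih =>
      intro r
      cases r with
      | zero => simp [cfun]
      | succ r =>
          simp only [cfun]
          have h1 := ih r
          have h2 := ih N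
          nlinarith

lemma cfun_anti_i' : ∀ {i i' : ℕ} (r : ℕ), i ≤ i' → cfun η N i' r ≤ cfun η N i r := by
  intro i i' r h
  induction i' with
  | zero =>
      obtain rfl := Nat.le_zero.mp h
      exact le_rfl
  | succ i' ih =>
      by_cases hi : i ≤ i'
      · exact le_trans (cfun_anti_i hη0 hη1 i' r) (ih hi)
      · have : i = i' + 1 := by omega
        rw [this]

lemma cfun_zero_r (i : ℕ) : cfun η N i 0 = 0 := by
  cases i <;> simp [cfun]

lemma cfun_key : ∀ (r i : ℕ), cfun η N (i + r) r ≤ (1 - η ^ r) * cfun η N i N := by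
  intro r
  induction r with
  | zero =>
      intro i
      simp [cfun_zero_r hη0 hη1]
  | succ r ih =>
      intro i
      have hstep : cfun η N (i + (r+1)) (r+1)
          = η * cfun η N (i + r) r + (1 - η) * cfun η N (i + r) N := by
        have : i + (r + 1) = (i + r) + 1 := by omega
        rw [this]
        rfl
      rw [hstep]
      have h1 := ih i
      have h2 : cfun η N (i + r) N ≤ cfun η N i N := cfun_anti_i' hη0 hη1 N (by omega)
      have h3 : 0 ≤ cfun η N i N := cfun_nonneg hη0 hη1 i N
      have h4 : 0 ≤ η ^ r := by positivity
      have h5 : η ^ (r + 1) = η * η ^ r := by rw [pow_succ]; ring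
      nlinarith

lemma cfun_geom (hN : 1 ≤ N) : ∀ k : ℕ, cfun η N (k * N) N ≤ (1 - η ^ N) ^ k := by
  intro k
  induction k with
  | zero => simpa using cfun_le_one hη0 hη1 0 N
  | succ k ih =>
      have hstep : (k + 1) * N = k * N + N := by ring
      rw [hstep]
      calc cfun η N (k * N + N) N ≤ (1 - η ^ N) * cfun η N (k * N) N := cfun_key hη0 hη1 N (k * N)
        _ ≤ (1 - η ^ N) * (1 - η ^ N) ^ k := by
            refine mul_le_mul_of_nonneg_left ih ?_
            have : η ^ N ≤ 1 := pow_le_one₀ hη0.le hη1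
            linarith
        _ = (1 - η ^ N) ^ (k + 1) := by rw [pow_succ]; ring

end Cfun

section Win
open scoped Classical
variable {Q A : Type} [Fintype Q] [Fintype A] (G : Game Q A) (T : Finset Q)

lemma Bseq_mono_k' {Y : Finset Q} {k m : ℕ} (h : k ≤ m) : Bseq G T Y k ⊆ Bseq G T Y m := by
  induction m with
  | zero =>
      obtain rfl := Nat.le_zero.mp h
      exact Finset.Subset.refl _
  | succ m ih =>
      by_cases hk : k ≤ m
      · exact (ih hk).trans (Bseq_mono_k G T Y m)
      · have : k = m + 1 := by omega
        rw [this]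

lemma Bseq_sub_Wr {k : ℕ} (h : k ≤ Fintype.card Q) : Bseq G T (Wr G T) k ⊆ Wr G T := by
  have h1 : Bseq G T (Wr G T) k ⊆ Bseq G T (Wr G T) (Fintype.card Q) := Bseq_mono_k' G T h
  rw [← Wr_eq_Bseq G T] at h1
  exact h1

variable {η : ℝ}

/-- The winning bound: with `sigmaStar`, from a winning state, against any strategy,
the avoidance probability is at most `cfun η N i (rnk q)`. -/
lemma win_bound (hG : IsGame G) (a0 : A) {τ : Strat2 Q A} (hτ : IsStrat2 τ)
    (hη0 : 0 < η) (hη1 : η ≤ 1)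
    (hηδ : ∀ q a b q', 0 < G.δ q a b q' → η ≤ G.δ q a b q') :
    ∀ (i : ℕ) (q : Q), q ∈ Wr G T → q ∉ T → ∀ h : List Q,
      Av G T (sigmaStar G T a0) τ i (q :: h) ≤ cfun η (Fintype.card Q) i (rnk G T q) := by
  have hσ := sigmaStar_isStrat G T a0
  set N := Fintype.card Q with hN
  intro i
  induction i with
  | zero =>
      intro q hq hqT h
      have h3 : rnk G T q = (rnk G T q - 1) + 1 := by
        have := rnk_pos G T hq; omega
      rw [h3]
      show (1 : ℝ) ≤ 1
      exact le_rfl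
  | succ i ih =>
      intro q hq hqT h
      have hr1 : 1 ≤ rnk G T q := rnk_pos G T hq
      have hrN : rnk G T q ≤ N := rnk_le_card G T hq
      set a := actW G T a0 q with ha
      obtain ⟨hsafe, hprog⟩ := actW_spec G T a0 hq hqT
      show (∑ q' ∈ Tᶜ, stp G (sigmaStar G T a0) τ q h q' *
        Av G T (sigmaStar G T a0) τ i (q' :: q :: h)) ≤ _
      rw [Finset.sum_congr rfl fun q' _ => by rw [stp_sigmaStar G T a0 τ q h q']]
      rw [Finset.sum_congr rfl fun q' (_ : q' ∈ Tᶜ) =>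
        (Finset.sum_mul _ _ _ :
          (∑ b : A, τ (q :: h) a b * G.δ q a b q') * _ = _)]
      rw [Finset.sum_comm]
      set R := η * cfun η N i (rnk G T q - 1) + (1 - η) * cfun η N i N with hR
      have hciN0 : 0 ≤ cfun η N i N := cfun_nonneg hη0 hη1 i N
      have hclow0 : 0 ≤ cfun η N i (rnk G T q - 1) := cfun_nonneg hη0 hη1 i _
      have hclow : cfun η N i (rnk G T q - 1) ≤ cfun η N i N :=
        cfun_mono_r' hη0 hη1 (by omega)
      have inner : ∀ b : A,
          (∑ q' ∈ Tᶜ, τ (q :: h) a b * G.δ q a b q' *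
            Av G T (sigmaStar G T a0) τ i (q' :: q :: h)) ≤ τ (q :: h) a b * R := by
        intro b
        obtain ⟨q'', hδ'', hq''mem⟩ := hprog b
        have hδ''η : η ≤ G.δ q a b q'' := hηδ _ _ _ _ hδ''
        have hδ''1 : G.δ q a b q'' ≤ 1 := by
          rw [← hG.2 q a b]
          exact Finset.single_le_sum (fun q' _ => hG.1 q a b q') (Finset.mem_univ q'')
        have hq''W : q'' ∈ Wr G T := Bseq_sub_Wr G T (by omega) hq''mem
        have hrnk'' : rnk G T q'' ≤ rnk G T q - 1 := rnk_le_of_mem G T hq''mem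
        have tb : ∀ q' ∈ Tᶜ, G.δ q a b q' * Av G T (sigmaStar G T a0) τ i (q' :: q :: h) ≤
            G.δ q a b q' * cfun η N i N := by
          intro q' hq'
          rcases eq_or_lt_of_le (hG.1 q a b q') with hdel | hdel
          · rw [← hdel]; simp
          · refine mul_le_mul_of_nonneg_left ?_ (hG.1 _ _ _ _)
            have hq'W : q' ∈ Wr G T := hsafe b q' hdel
            have hq'T : q' ∉ T := by simpa using hq'
            exact le_trans (ih q' hq'W hq'T (q :: h))
              (cfun_mono_r' hη0 hη1 (rnk_le_card G T hq'W))
        have key : (∑ q' ∈ Tᶜ, G.δ q a b q' *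
            Av G T (sigmaStar G T a0) τ i (q' :: q :: h)) ≤ R := by
          by_cases hq''T : q'' ∈ T
          · -- the progress witness is already in T
            have hsub : ∑ q' ∈ Tᶜ, G.δ q a b q' ≤ 1 - G.δ q a b q'' := by
              have h1 : G.δ q a b q'' + ∑ q' ∈ Tᶜ, G.δ q a b q'
                  = ∑ q' ∈ insert q'' Tᶜ, G.δ q a b q' := by
                rw [Finset.sum_insert (by simpa using hq''T)]
              have h2 : ∑ q' ∈ insert q'' Tᶜ, G.δ q a b q' ≤ 1 := by
                rw [← hG.2 q a b]
                exact Finset.sum_le_sum_of_subset_of_nonneg (Finset.subset_univ _)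
                  (fun q' _ _ => hG.1 q a b q')
              linarith
            calc (∑ q' ∈ Tᶜ, G.δ q a b q' * Av G T (sigmaStar G T a0) τ i (q' :: q :: h))
                ≤ ∑ q' ∈ Tᶜ, G.δ q a b q' * cfun η N i N := Finset.sum_le_sum tb
              _ = (∑ q' ∈ Tᶜ, G.δ q a b q') * cfun η N i N := by rw [Finset.sum_mul]
              _ ≤ (1 - G.δ q a b q'') * cfun η N i N :=
                  mul_le_mul_of_nonneg_right hsub hciN0
              _ ≤ R := by rw [hR]; nlinarith
          · -- the progress witness is outside T
            have hq''c : q'' ∈ Tᶜ := by simpa using hq''T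
            rw [← Finset.add_sum_erase Tᶜ _ hq''c]
            have h1 : Av G T (sigmaStar G T a0) τ i (q'' :: q :: h) ≤
                cfun η N i (rnk G T q - 1) :=
              le_trans (ih q'' hq''W hq''T (q :: h)) (cfun_mono_r' hη0 hη1 hrnk'')
            have h2 : (∑ q' ∈ Tᶜ.erase q'', G.δ q a b q' *
                Av G T (sigmaStar G T a0) τ i (q' :: q :: h)) ≤
                (1 - G.δ q a b q'') * cfun η N i N := by
              have hsub : ∑ q' ∈ Tᶜ.erase q'', G.δ q a b q' ≤ 1 - G.δ q a b q'' := by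
                have h3 : G.δ q a b q'' + ∑ q' ∈ Tᶜ.erase q'', G.δ q a b q'
                    = ∑ q' ∈ Tᶜ, G.δ q a b q' := Finset.add_sum_erase Tᶜ _ hq''c
                have h4 : ∑ q' ∈ Tᶜ, G.δ q a b q' ≤ 1 := by
                  rw [← hG.2 q a b]
                  exact Finset.sum_le_sum_of_subset_of_nonneg (Finset.subset_univ _)
                    (fun q' _ _ => hG.1 q a b q')
                linarith
              calc (∑ q' ∈ Tᶜ.erase q'', G.δ q a b q' *
                  Av G T (sigmaStar G T a0) τ i (q' :: q :: h))
                  ≤ ∑ q' ∈ Tᶜ.erase q'', G.δ q a b q' * cfun η N i N :=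
                    Finset.sum_le_sum (fun q' hq' => tb q' (Finset.mem_of_mem_erase hq'))
                _ = (∑ q' ∈ Tᶜ.erase q'', G.δ q a b q') * cfun η N i N := by
                    rw [Finset.sum_mul]
                _ ≤ _ := mul_le_mul_of_nonneg_right hsub hciN0
            have h5 : G.δ q a b q'' * Av G T (sigmaStar G T a0) τ i (q'' :: q :: h) ≤
                G.δ q a b q'' * cfun η N i (rnk G T q - 1) :=
              mul_le_mul_of_nonneg_left h1 (hG.1 _ _ _ _)
            rw [hR]
            nlinarith
        calc (∑ q' ∈ Tᶜ, τ (q :: h) a b * G.δ q a b q' *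
            Av G T (sigmaStar G T a0) τ i (q' :: q :: h))
            = τ (q :: h) a b * ∑ q' ∈ Tᶜ, G.δ q a b q' *
              Av G T (sigmaStar G T a0) τ i (q' :: q :: h) := by
              rw [Finset.mul_sum]
              exact Finset.sum_congr rfl fun q' _ => by ring
          _ ≤ τ (q :: h) a b * R := mul_le_mul_of_nonneg_left key ((hτ _ _).1 b)
      calc (∑ b : A, ∑ q' ∈ Tᶜ, τ (q :: h) a b * G.δ q a b q' *
            Av G T (sigmaStar G T a0) τ i (q' :: q :: h))
          ≤ ∑ b : A, τ (q :: h) a b * R := Finset.sum_le_sum fun b _ => inner b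
        _ = R := by rw [← Finset.sum_mul, (hτ _ _).2, one_mul]
        _ = cfun η N (i + 1) (rnk G T q) := by
            have h3 : rnk G T q = (rnk G T q - 1) + 1 := by omega
            rw [h3]
            rfl

end Win

/-- if `d₀` is almost-sure winning for the reachability objective `◇T`,
then there is a single memoryless player-1 strategy `σ` such that for all `ε > 0`
there is a horizon `h_ε` with `Pr^{σ,τ}_{d₀}(◇^{≤h_ε} T) ≥ 1 - ε` for every player-2
strategy `τ`. -/
theorem as_reach_memoryless_uniform {Q A : Type} [Fintype Q] [Fintype A]
    (G : Game Q A) (hG : IsGame G) (T : Finset Q) (d0 : Q → ℝ) (hd0 : IsDist d0)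
    (hAS : ∃ σ, IsStrat1 σ ∧ ∀ τ, IsStrat2 τ →
        ∀ ε : ℝ, 0 < ε → ∃ i, 1 - ε ≤ reachProb G d0 σ τ T i) :
    ∃ σ, IsStrat1 σ ∧ Memoryless1 σ ∧
      ∀ ε : ℝ, 0 < ε → ∃ hε : ℕ, ∀ τ, IsStrat2 τ →
        1 - ε ≤ reachProb G d0 σ τ T hε := by
  classical
  obtain ⟨σ0, hσ0, hwin⟩ := hAS
  -- A and Q are nonempty
  have hA : Nonempty A := by
    by_contra h
    rw [not_nonempty_iff] at h
    have h2 := (hσ0 []).2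
    rw [Finset.univ_eq_empty, Finset.sum_empty] at h2
    norm_num at h2
  have hQ : Nonempty Q := by
    by_contra h
    rw [not_nonempty_iff] at h
    have h2 := hd0.2
    rw [Finset.univ_eq_empty, Finset.sum_empty] at h2
    norm_num at h2
  obtain ⟨a0⟩ := hA
  obtain ⟨q0⟩ := hQ
  set N := Fintype.card Q with hN
  have hN1 : 1 ≤ N := Fintype.card_pos_iff.mpr ⟨q0⟩
  -- the minimum positive transition probability
  set ηset : Finset ℝ := (Finset.univ.image
    (fun x : Q × A × A × Q => G.δ x.1 x.2.1 x.2.2.1 x.2.2.2)).filter (fun r => 0 < r) with hηset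
  have hδpos : ∃ q', 0 < G.δ q0 a0 a0 q' := by
    by_contra h
    push_neg at h
    have h2 := hG.2 q0 a0 a0
    have h3 : (∑ q' : Q, G.δ q0 a0 a0 q') ≤ 0 := Finset.sum_nonpos fun q' _ => h q'
    linarith
  obtain ⟨q1, hq1⟩ := hδpos
  have hηne : ηset.Nonempty := by
    refine ⟨G.δ q0 a0 a0 q1, ?_⟩
    rw [hηset, Finset.mem_filter]
    exact ⟨Finset.mem_image.mpr ⟨(q0, a0, a0, q1), Finset.mem_univ _, rfl⟩, hq1⟩
  set η := ηset.min' hηne with hη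
  have hη0 : 0 < η := by
    have h2 : η ∈ ηset := ηset.min'_mem hηne
    have h3 := Finset.mem_filter.mp (hηset ▸ h2)
    exact h3.2
  have hηδ : ∀ q a b q', 0 < G.δ q a b q' → η ≤ G.δ q a b q' := by
    intro q a b q' h
    refine Finset.min'_le _ _ ?_
    rw [hηset]
    exact Finset.mem_filter.mpr
      ⟨Finset.mem_image.mpr ⟨(q, a, b, q'), Finset.mem_univ _, rfl⟩, h⟩
  have hδle1 : ∀ q a b q', G.δ q a b q' ≤ 1 := by
    intro q a b q'
    rw [← hG.2 q a b]
    exact Finset.single_le_sum (fun x _ => hG.1 q a b x) (Finset.mem_univ q')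
  have hη1 : η ≤ 1 := le_trans (hηδ _ _ _ _ hq1) (hδle1 _ _ _ _)
  have hτstar := tauStar_isStrat G T a0
  -- completeness: the support of d0 is inside the winning region
  have hsupp : ∀ q, 0 < d0 q → q ∈ Wr G T := by
    intro q hq
    by_contra hqW
    have hqT : q ∉ T := not_T_of_not_Wr G T hqW
    have hb : ∀ i, d0 q * η ^ N ≤ 1 - reachProb G d0 σ0 (tauStar G T a0) T i := by
      intro i
      rw [reach_formula G T d0 σ0 (tauStar G T a0) hG hd0 hσ0 hτstar i]
      have hAv : η ^ lvl G T q ≤ Av G T σ0 (tauStar G T a0) i (q :: []) :=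
        spoil_bound G T σ0 hG hσ0 a0 hη0 hη1 hηδ i q hqW []
      have h1 : d0 q * η ^ N ≤ d0 q * Av G T σ0 (tauStar G T a0) i [q] := by
        refine mul_le_mul_of_nonneg_left (le_trans ?_ hAv) hq.le
        exact pow_le_pow_of_le_one hη0.le hη1 (lvl_le_card G T hqW)
      refine le_trans h1 (Finset.single_le_sum
        (f := fun x => d0 x * Av G T σ0 (tauStar G T a0) i [x])
        (fun x _ => mul_nonneg (hd0.1 x) (Av_nonneg G T σ0 _ hG hσ0 hτstar i _))
        (by simpa using hqT))
    have hε : 0 < d0 q * η ^ N := by positivity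
    obtain ⟨i, hi⟩ := hwin (tauStar G T a0) hτstar (d0 q * η ^ N / 2) (by positivity)
    have := hb i
    linarith
  -- the memoryless strategy wins uniformly
  refine ⟨sigmaStar G T a0, sigmaStar_isStrat G T a0, sigmaStar_memoryless G T a0, ?_⟩
  intro ε hε
  have hr1 : (0:ℝ) ≤ 1 - η ^ N := by
    have : η ^ N ≤ 1 := pow_le_one₀ hη0.le hη1
    linarith
  have hrlt : 1 - η ^ N < 1 := by
    have : 0 < η ^ N := by positivity
    linarith
  obtain ⟨k, hk⟩ := exists_pow_lt_of_lt_one hε hrlt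
  refine ⟨k * N, fun τ hτ => ?_⟩
  have key : 1 - reachProb G d0 (sigmaStar G T a0) τ T (k * N) ≤ (1 - η ^ N) ^ k := by
    rw [reach_formula G T d0 (sigmaStar G T a0) τ hG hd0 (sigmaStar_isStrat G T a0) hτ]
    have hterm : ∀ q ∈ Tᶜ, d0 q * Av G T (sigmaStar G T a0) τ (k * N) [q] ≤
        d0 q * cfun η N (k * N) N := by
      intro q hq
      rcases eq_or_lt_of_le (hd0.1 q) with hd | hd
      · rw [← hd]; simp
      · refine mul_le_mul_of_nonneg_left ?_ (hd0.1 q)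
        have hqW : q ∈ Wr G T := hsupp q hd
        have hqT : q ∉ T := by simpa using hq
        exact le_trans (win_bound G T hG a0 hτ hη0 hη1 hηδ (k * N) q hqW hqT [])
          (cfun_mono_r' hη0 hη1 (rnk_le_card G T hqW))
    calc (∑ q ∈ Tᶜ, d0 q * Av G T (sigmaStar G T a0) τ (k * N) [q])
        ≤ ∑ q ∈ Tᶜ, d0 q * cfun η N (k * N) N := Finset.sum_le_sum hterm
      _ = (∑ q ∈ Tᶜ, d0 q) * cfun η N (k * N) N := by rw [Finset.sum_mul]
      _ ≤ 1 * cfun η N (k * N) N := by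
          refine mul_le_mul_of_nonneg_right ?_ (cfun_nonneg hη0 hη1 _ _)
          rw [← hd0.2]
          exact Finset.sum_le_sum_of_subset_of_nonneg (Finset.subset_univ _)
            (fun q _ _ => hd0.1 q)
      _ = cfun η N (k * N) N := one_mul _
      _ ≤ (1 - η ^ N) ^ k := cfun_geom hη0 hη1 hN1 k
  linarith
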